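/- For every nonzero left ideal I of a finite Frobenius ring R and every c ∈ R, the sum of the homogeneous weights over the coset I + c equals |I|: Σ_{x ∈ I} w_hom(x + c) = |I|. -/
import Mathlib

open scoped Classical

/-- The normalized homogeneous weight defined from an additive character. -/
noncomputable def whom {R : Type} [Ring R] [Fintype R] (χ : AddChar R ℂ) (x : R) : ℂ :=
  1 - (Fintype.card Rˣ : ℂ)⁻¹ * ∑ u : Rˣ, χ ((u : R) * x)

/-- A generating character: a character of `(R,+)` whose kernel contains no
nonzero left ideal. -/
def IsGenChar {R : Type} [Ring R] [Fintype R] (χ : AddChar R ℂ) : Prop :=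
  ∀ I : Ideal R, I ≠ ⊥ → ∃ x ∈ I, χ x ≠ 1

/-- For every nonzero left ideal `I` of a finite Frobenius ring `R` and every
`c ∈ R`: `Σ_{x ∈ I} w_hom(x + c) = |I|`. -/
theorem sum_whom_coset {R : Type} [Ring R] [Fintype R]
    (χ : AddChar R ℂ) (hχ : IsGenChar χ)
    (I : Ideal R) (hI : I ≠ ⊥) (c : R) :
    ∑ x : I, whom χ ((x : R) + c) = (Nat.card I : ℂ) := by
  -- the restriction of χ to I is a nontrivial character
  have hres : (χ.compAddMonoidHom (I.subtype.toAddMonoidHom)) ≠ 0 := by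
    obtain ⟨x, hxI, hx⟩ := hχ I hI
    intro h
    apply hx
    have := congrArg (fun ψ : AddChar I ℂ => ψ ⟨x, hxI⟩) h
    simpa using this
  have hIsum : ∑ x : I, χ (x : R) = 0 := by
    have := AddChar.sum_eq_zero_iff_ne_zero.2 hres
    simpa using this
  have key : ∀ u : Rˣ, ∑ x : I, χ ((u : R) * ((x : R) + c)) = 0 := by
    intro u
    have hbij : ∑ x : I, χ ((u : R) * (x : R)) = ∑ x : I, χ (x : R) := by
      apply Fintype.sum_bijective
        (fun x : I => (⟨(u : R) * x, I.mul_mem_left _ x.2⟩ : I))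
      · constructor
        · intro a b hab
          have : (u : R) * (a : R) = (u : R) * (b : R) := by
            simpa using congrArg (Subtype.val) hab
          exact Subtype.ext (by
            have := congrArg (fun t => ((u⁻¹ : Rˣ) : R) * t) this
            simpa [← mul_assoc, ← Units.val_mul] using this)
        · intro y
          refine ⟨⟨((u⁻¹ : Rˣ) : R) * y, I.mul_mem_left _ y.2⟩, ?_⟩
          exact Subtype.ext (by simp [← mul_assoc, ← Units.val_mul])
      · intro x; rfl
    calc ∑ x : I, χ ((u : R) * ((x : R) + c))
        = ∑ x : I, χ ((u : R) * (x : R)) * χ ((u : R) * c) := by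
          refine Finset.sum_congr rfl fun x _ => ?_
          rw [mul_add, AddChar.map_add_eq_mul]
      _ = (∑ x : I, χ ((u : R) * (x : R))) * χ ((u : R) * c) := by
          rw [Finset.sum_mul]
      _ = 0 := by rw [hbij, hIsum, zero_mul]
  have : ∑ x : I, whom χ ((x : R) + c)
      = ∑ x : I, (1 : ℂ)
        - (Fintype.card Rˣ : ℂ)⁻¹ * ∑ u : Rˣ, ∑ x : I, χ ((u : R) * ((x : R) + c)) := by
    rw [Finset.sum_comm]
    simp [whom, Finset.sum_sub_distrib, Finset.mul_sum]
  rw [this]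
  simp [key, Nat.card_eq_fintype_card]
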